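/- Let $J$ be nonnegative symmetric with the Lévy integrability condition, let $\Omega \subset \mathbb{R}^N$ be open and bounded with $\Lambda_1(\Omega) > 0$, let $c \in L^\infty(\Omega)$ with $\|c^+\|_{L^\infty(\Omega)} < \Lambda_1(\Omega)$, and $g \in L^2(\Omega)$. If $u \in \mathcal{V}^J(\Omega)$ is a variational supersolution of $Iu = c(x)u + g$ in $\Omega$ with $u \ge 0$ a.e. in $\mathbb{R}^N \setminus \Omega$, then $\|u^-\|_{L^2(\Omega)} \le \|g^-\|_{L^2(\Omega)}/(\Lambda_1(\Omega) - \|c^+\|_{L^\infty(\Omega)})$. In particular, if $g \ge 0$ in $\Omega$ then $u \ge 0$ a.e. in $\mathbb{R}^N$. -/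

import Mathlib

open MeasureTheory Set

noncomputable section

variable {N : ℕ}

/-- The signed bilinear form `ℰ_J(v,w) = ½ ∫∫ (v(x)-v(y))(w(x)-w(y)) J(x,y) dx dy`. -/
def bilinForm (J : EuclideanSpace ℝ (Fin N) → EuclideanSpace ℝ (Fin N) → ℝ)
    (v w : EuclideanSpace ℝ (Fin N) → ℝ) : ℝ :=
  (1 / 2) * ∫ p : EuclideanSpace ℝ (Fin N) × EuclideanSpace ℝ (Fin N),
    (v p.1 - v p.2) * (w p.1 - w p.2) * J p.1 p.2

/-- `v ∈ 𝒟^J(Ω)`: measurable, vanishing outside `Ω`, with finite energy. -/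
def memDJ (J : EuclideanSpace ℝ (Fin N) → EuclideanSpace ℝ (Fin N) → ℝ)
    (Ω : Set (EuclideanSpace ℝ (Fin N))) (v : EuclideanSpace ℝ (Fin N) → ℝ) : Prop :=
  Measurable v ∧ (∀ x ∉ Ω, v x = 0) ∧
    Integrable (fun p : EuclideanSpace ℝ (Fin N) × EuclideanSpace ℝ (Fin N) =>
      (v p.1 - v p.2) ^ 2 * J p.1 p.2)

lemma aux_key (a b : ℝ) :
    (a - b) * (max (-a) 0 - max (-b) 0) + (max (-a) 0 - max (-b) 0) ^ 2 ≤ 0 := by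
  rcases le_total 0 a with ha | ha <;> rcases le_total 0 b with hb | hb
  · rw [max_eq_right (by linarith), max_eq_right (by linarith)]; ring_nf; nlinarith
  · rw [max_eq_right (by linarith), max_eq_left (by linarith)]; nlinarith
  · rw [max_eq_left (by linarith), max_eq_right (by linarith)]; nlinarith
  · rw [max_eq_left (by linarith), max_eq_left (by linarith)]; nlinarith

lemma aux_lip (a b : ℝ) : |max (-a) 0 - max (-b) 0| ≤ |a - b| := by
  have := abs_max_sub_max_le_abs (-a) (-b) 0
  calc |max (-a) 0 - max (-b) 0| ≤ |-a - -b| := this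
    _ = |a - b| := by rw [← abs_neg]; ring_nf

lemma aux_sq_le (a : ℝ) : (max (-a) 0) ^ 2 ≤ a ^ 2 := by
  rcases le_total 0 a with ha | ha
  · rw [max_eq_right (by linarith)]; nlinarith
  · rw [max_eq_left (by linarith)]; nlinarith

lemma aux_neg_min (a : ℝ) : -min a 0 = max (-a) 0 := by
  rcases le_total 0 a with ha | ha
  · rw [min_eq_right ha, max_eq_right (by linarith)]; ring
  · rw [min_eq_left ha, max_eq_left (by linarith)]

set_option maxHeartbeats 1000000 in
/-- Proposition (weak maximum principle): if `Λ ≤ Λ₁(Ω)` with `0 < Λ`,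
`‖c⁺‖_{L^∞(Ω)} ≤ C₀ < Λ`, `g ∈ L²(Ω)`, and `u ∈ 𝒱^J(Ω)` is a variational
supersolution of `Iu = c(x)u + g` in `Ω` with `u ≥ 0` a.e. in `ℝ^N ∖ Ω`, then
`‖u⁻‖_{L²(Ω)} ≤ ‖g⁻‖_{L²(Ω)}/(Λ - C₀)`; in particular, `g ≥ 0` in `Ω`
implies `u ≥ 0` a.e. in `ℝ^N`. -/
theorem weak_maximum_principle
    (J : EuclideanSpace ℝ (Fin N) → EuclideanSpace ℝ (Fin N) → ℝ)
    (hJpos : ∀ x y, 0 ≤ J x y) (hJsym : ∀ x y, J x y = J y x)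
    (hJmeas : Measurable fun p : EuclideanSpace ℝ (Fin N) × EuclideanSpace ℝ (Fin N) => J p.1 p.2)
    (CJ : ℝ)
    (hCJ : ∀ x, (∫⁻ y, ENNReal.ofReal (min 1 (dist x y ^ 2) * J x y)) ≤ ENNReal.ofReal CJ)
    (Ω : Set (EuclideanSpace ℝ (Fin N))) (hΩ : IsOpen Ω) (hΩb : Bornology.IsBounded Ω)
    -- `Λ` is a positive lower bound for the first Dirichlet eigenvalue `Λ₁(Ω)`:
    (Λ : ℝ) (hΛpos : 0 < Λ)
    (hΛ : ∀ v, memDJ J Ω v → Λ * ∫ x in Ω, (v x) ^ 2 ≤ bilinForm J v v)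
    -- `c ∈ L^∞(Ω)` with `‖c⁺‖_{L^∞(Ω)} ≤ C₀ < Λ`:
    (c : EuclideanSpace ℝ (Fin N) → ℝ) (hc : Measurable c)
    (C₀ : ℝ) (hC₀ : 0 ≤ C₀) (hcC₀ : ∀ x ∈ Ω, max (c x) 0 ≤ C₀) (hC₀Λ : C₀ < Λ)
    -- `g ∈ L²(Ω)`:
    (g : EuclideanSpace ℝ (Fin N) → ℝ) (hg : Measurable g)
    (hgL2 : IntegrableOn (fun x => (g x) ^ 2) Ω)
    -- `u ∈ 𝒱^J(Ω) ∩ L²_loc`: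
    (u : EuclideanSpace ℝ (Fin N) → ℝ) (hu : Measurable u)
    (huρ : IntegrableOn
      (fun p : EuclideanSpace ℝ (Fin N) × EuclideanSpace ℝ (Fin N) =>
        (u p.1 - u p.2) ^ 2 * J p.1 p.2) (Ω ×ˢ univ))
    (huL2 : LocallyIntegrable fun x => (u x) ^ 2)
    -- `u` is a variational supersolution of `Iu = c(x)u + g` in `Ω`:
    (hsuper : ∀ v, memDJ J Ω v → (∀ x, 0 ≤ v x) →
      Bornology.IsBounded (Function.support v) →
      (∫ x in Ω, (c x * u x + g x) * v x) ≤ bilinForm J u v)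
    -- `u ≥ 0` a.e. in `ℝ^N ∖ Ω`:
    (hu0 : ∀ᵐ x, x ∉ Ω → 0 ≤ u x) :
    (∫ x in Ω, (-min (u x) 0) ^ 2) ^ (1 / 2 : ℝ)
        ≤ (∫ x in Ω, (-min (g x) 0) ^ 2) ^ (1 / 2 : ℝ) / (Λ - C₀) ∧
    ((∀ x ∈ Ω, 0 ≤ g x) → ∀ᵐ x, 0 ≤ u x) := by
  classical
  have hΩm : MeasurableSet Ω := hΩ.measurableSet
  set w : EuclideanSpace ℝ (Fin N) → ℝ := fun x => if x ∈ Ω then max (-u x) 0 else 0 with hw_def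
  have hwmeas : Measurable w := Measurable.ite hΩm (hu.neg.max measurable_const) measurable_const
  have hw_nonneg : ∀ x, 0 ≤ w x := by
    intro x; simp only [hw_def]; split
    · exact le_max_right _ _
    · exact le_refl 0
  have hw_out : ∀ x ∉ Ω, w x = 0 := by intro x hx; simp only [hw_def, if_neg hx]
  have hw_in : ∀ x ∈ Ω, w x = max (-u x) 0 := by intro x hx; simp only [hw_def, if_pos hx]
  have hwae : ∀ᵐ x, w x = max (-u x) 0 := by
    filter_upwards [hu0] with x hx
    by_cases hxΩ : x ∈ Ω
    · exact hw_in x hxΩ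
    · rw [hw_out x hxΩ, max_eq_right (by linarith [hx hxΩ])]
  -- product a.e. statement
  have hvol : (volume : Measure ((EuclideanSpace ℝ (Fin N)) × (EuclideanSpace ℝ (Fin N)))) = (volume : Measure (EuclideanSpace ℝ (Fin N))).prod volume :=
    Measure.volume_eq_prod _ _
  have hwae2 : ∀ᵐ p : (EuclideanSpace ℝ (Fin N)) × (EuclideanSpace ℝ (Fin N)), w p.1 = max (-u p.1) 0 ∧ w p.2 = max (-u p.2) 0 := by
    rw [hvol]
    exact (Measure.quasiMeasurePreserving_fst.ae hwae).and
      (Measure.quasiMeasurePreserving_snd.ae hwae)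
  -- the energy kernel for u
  set G : (EuclideanSpace ℝ (Fin N)) × (EuclideanSpace ℝ (Fin N)) → ℝ := fun p => (u p.1 - u p.2) ^ 2 * J p.1 p.2 with hG_def
  have hGmeas : Measurable G :=
    (((hu.comp measurable_fst).sub (hu.comp measurable_snd)).pow_const 2).mul hJmeas
  have hGnonneg : ∀ p, 0 ≤ G p := fun p => mul_nonneg (sq_nonneg _) (hJpos _ _)
  have hGswap : ∀ p : (EuclideanSpace ℝ (Fin N)) × (EuclideanSpace ℝ (Fin N)), G (Prod.swap p) = G p := by
    intro p; simp only [hG_def, Prod.fst_swap, Prod.snd_swap, hJsym p.2 p.1]; ring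
  have hG2 : IntegrableOn G ((univ : Set (EuclideanSpace ℝ (Fin N))) ×ˢ Ω) := by
    have hmp : MeasurePreserving (Prod.swap : (EuclideanSpace ℝ (Fin N)) × (EuclideanSpace ℝ (Fin N)) → (EuclideanSpace ℝ (Fin N)) × (EuclideanSpace ℝ (Fin N))) volume volume := by
      rw [hvol]; exact Measure.measurePreserving_swap
    have := (hmp.integrableOn_comp_preimage
      (MeasurableEquiv.prodComm (α := EuclideanSpace ℝ (Fin N)) (β := EuclideanSpace ℝ (Fin N))).measurableEmbedding
      (f := G) (s := (univ : Set (EuclideanSpace ℝ (Fin N))) ×ˢ Ω)).mpr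
    have h2 : IntegrableOn (G ∘ Prod.swap) (Prod.swap ⁻¹' ((univ : Set (EuclideanSpace ℝ (Fin N))) ×ˢ Ω)) := by
      have hpre : (Prod.swap ⁻¹' ((univ : Set (EuclideanSpace ℝ (Fin N))) ×ˢ Ω) : Set ((EuclideanSpace ℝ (Fin N)) × (EuclideanSpace ℝ (Fin N)))) = Ω ×ˢ univ := by
        ext p; simp [and_comm]
      have hfun : (G ∘ Prod.swap) = G := funext hGswap
      rw [hpre, hfun]; exact huρ
    exact (hmp.integrableOn_comp_preimage
      (MeasurableEquiv.prodComm (α := EuclideanSpace ℝ (Fin N)) (β := EuclideanSpace ℝ (Fin N))).measurableEmbedding).mp h2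
  set S : Set ((EuclideanSpace ℝ (Fin N)) × (EuclideanSpace ℝ (Fin N))) := Ω ×ˢ (univ : Set (EuclideanSpace ℝ (Fin N))) ∪ (univ : Set (EuclideanSpace ℝ (Fin N))) ×ˢ Ω with hS_def
  have hSm : MeasurableSet S := (hΩm.prod MeasurableSet.univ).union (MeasurableSet.univ.prod hΩm)
  have hGS : Integrable (S.indicator G) := by
    rw [integrable_indicator_iff hSm]
    exact huρ.union hG2
  have hout : ∀ p : (EuclideanSpace ℝ (Fin N)) × (EuclideanSpace ℝ (Fin N)), p ∉ S → w p.1 - w p.2 = 0 := by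
    intro p hp
    simp only [hS_def, mem_union, mem_prod, mem_univ, and_true, true_and, not_or] at hp
    rw [hw_out p.1 hp.1, hw_out p.2 hp.2, sub_zero]
  -- bound for differences a.e.
  have hdiff : ∀ᵐ p : (EuclideanSpace ℝ (Fin N)) × (EuclideanSpace ℝ (Fin N)), |w p.1 - w p.2| ≤ |u p.1 - u p.2| ∨ w p.1 - w p.2 = 0 := by
    filter_upwards [hwae2] with p hp
    left; rw [hp.1, hp.2]; exact aux_lip _ _
  set F : (EuclideanSpace ℝ (Fin N)) × (EuclideanSpace ℝ (Fin N)) → ℝ := fun p => (w p.1 - w p.2) ^ 2 * J p.1 p.2 with hF_def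
  have hFmeas : Measurable F :=
    (((hwmeas.comp measurable_fst).sub (hwmeas.comp measurable_snd)).pow_const 2).mul hJmeas
  have hF : Integrable F := by
    apply Integrable.mono' hGS hFmeas.aestronglyMeasurable
    filter_upwards [hwae2] with p hp
    simp only [hF_def]
    rw [Real.norm_eq_abs, abs_of_nonneg (mul_nonneg (sq_nonneg _) (hJpos _ _))]
    by_cases hpS : p ∈ S
    · rw [indicator_of_mem hpS]
      apply mul_le_mul_of_nonneg_right _ (hJpos _ _)
      rw [← sq_abs (w p.1 - w p.2), ← sq_abs (u p.1 - u p.2)]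
      apply pow_le_pow_left₀ (abs_nonneg _)
      rw [hp.1, hp.2]; exact aux_lip _ _
    · rw [indicator_of_notMem hpS, hout p hpS]; simp
  set P : (EuclideanSpace ℝ (Fin N)) × (EuclideanSpace ℝ (Fin N)) → ℝ := fun p => (u p.1 - u p.2) * (w p.1 - w p.2) * J p.1 p.2 with hP_def
  have hPmeas : Measurable P :=
    (((hu.comp measurable_fst).sub (hu.comp measurable_snd)).mul
      ((hwmeas.comp measurable_fst).sub (hwmeas.comp measurable_snd))).mul hJmeas
  have hP : Integrable P := by
    apply Integrable.mono' hGS hPmeas.aestronglyMeasurable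
    filter_upwards [hwae2] with p hp
    simp only [hP_def]
    by_cases hpS : p ∈ S
    · rw [indicator_of_mem hpS, Real.norm_eq_abs]
      have h1 : |w p.1 - w p.2| ≤ |u p.1 - u p.2| := by rw [hp.1, hp.2]; exact aux_lip _ _
      calc |(u p.1 - u p.2) * (w p.1 - w p.2) * J p.1 p.2|
          = |u p.1 - u p.2| * |w p.1 - w p.2| * J p.1 p.2 := by
            rw [abs_mul, abs_mul, abs_of_nonneg (hJpos _ _)]
        _ ≤ |u p.1 - u p.2| * |u p.1 - u p.2| * J p.1 p.2 := by
            apply mul_le_mul_of_nonneg_right _ (hJpos _ _)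
            exact mul_le_mul_of_nonneg_left h1 (abs_nonneg _)
        _ = G p := by simp only [hG_def]; rw [abs_mul_abs_self]; ring
    · rw [indicator_of_notMem hpS]
      have h0 := hout p hpS
      simp only [hP_def, Real.norm_eq_abs, h0]
      simp
  -- w belongs to D^J(Ω)
  have hwDJ : memDJ J Ω w := ⟨hwmeas, hw_out, hF⟩
  -- energy inequality: E(u,w) ≤ -E(w,w)
  have hsum : ∫ p : (EuclideanSpace ℝ (Fin N)) × (EuclideanSpace ℝ (Fin N)), (P p + F p) ≤ 0 := by
    apply integral_nonpos_of_ae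
    filter_upwards [hwae2] with p hp
    simp only [hP_def, hF_def, hp.1, hp.2, Pi.zero_apply]
    have := aux_key (u p.1) (u p.2)
    have hJ := hJpos p.1 p.2
    nlinarith [this, hJ]
  have hEw : bilinForm J w w = (1 / 2) * ∫ p : (EuclideanSpace ℝ (Fin N)) × (EuclideanSpace ℝ (Fin N)), F p := by
    unfold bilinForm
    congr 1
    apply integral_congr_ae
    filter_upwards with p
    simp only [hF_def]; ring
  have hC : bilinForm J u w ≤ -bilinForm J w w := by
    have hadd : ∫ p : (EuclideanSpace ℝ (Fin N)) × (EuclideanSpace ℝ (Fin N)), (P p + F p) = (∫ p : (EuclideanSpace ℝ (Fin N)) × (EuclideanSpace ℝ (Fin N)), P p) + ∫ p : (EuclideanSpace ℝ (Fin N)) × (EuclideanSpace ℝ (Fin N)), F p :=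
      integral_add hP hF
    have hEu : bilinForm J u w = (1 / 2) * ∫ p : (EuclideanSpace ℝ (Fin N)) × (EuclideanSpace ℝ (Fin N)), P p := rfl
    rw [hEu, hEw]; linarith [hsum, hadd]
  -- set integrals on Ω
  have hcl : IsCompact (closure Ω) := hΩb.isCompact_closure
  have hu2 : IntegrableOn (fun x => u x ^ 2) Ω :=
    (huL2.integrableOn_isCompact hcl).mono_set subset_closure
  have hw2 : IntegrableOn (fun x => w x ^ 2) Ω := by
    apply hu2.mono' (hwmeas.pow_const 2).aestronglyMeasurable
    filter_upwards with x
    rw [Real.norm_eq_abs, abs_of_nonneg (sq_nonneg _)]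
    simp only [hw_def]; split
    · exact aux_sq_le _
    · simpa using sq_nonneg (u x)
  have hg2m : IntegrableOn (fun x => (max (-g x) 0) ^ 2) Ω := by
    apply hgL2.mono' ((hg.neg.max measurable_const).pow_const 2).aestronglyMeasurable
    filter_upwards with x
    rw [Real.norm_eq_abs, abs_of_nonneg (sq_nonneg _)]
    exact aux_sq_le _
  have hgw : IntegrableOn (fun x => max (-g x) 0 * w x) Ω := by
    apply (hg2m.add hw2).mono'
      (((hg.neg.max measurable_const).mul hwmeas)).aestronglyMeasurable
    filter_upwards with x
    rw [Real.norm_eq_abs]; simp only [Pi.mul_apply, Pi.neg_apply]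
    rw [abs_of_nonneg (mul_nonneg (le_max_right _ _) (hw_nonneg x))]
    simp only [Pi.add_apply]
    nlinarith [sq_nonneg (max (-g x) 0 - w x)]
  set A := ∫ x in Ω, w x ^ 2 with hA_def
  set Bq := ∫ x in Ω, (max (-g x) 0) ^ 2 with hB_def
  have hA0 : 0 ≤ A := setIntegral_nonneg hΩm fun x _ => sq_nonneg _
  have hB0 : 0 ≤ Bq := setIntegral_nonneg hΩm fun x _ => sq_nonneg _
  -- step A
  have h_h : IntegrableOn (fun x => -(C₀ * w x ^ 2) - max (-g x) 0 * w x) Ω :=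
    (hw2.const_mul C₀).neg.sub hgw
  have hA1 : ∫ x in Ω, (-(C₀ * w x ^ 2) - max (-g x) 0 * w x)
      ≤ ∫ x in Ω, (c x * u x + g x) * w x := by
    by_cases hint : IntegrableOn (fun x => (c x * u x + g x) * w x) Ω
    · apply setIntegral_mono_on h_h hint hΩm
      intro x hx
      have hwx := hw_in x hx
      have huw : u x * w x = -(w x ^ 2) := by
        rw [hwx]
        rcases le_total (u x) 0 with h | h
        · rw [max_eq_left (by linarith)]; ring
        · rw [max_eq_right (by linarith)]; ring
      have hcx : c x ≤ C₀ := le_trans (le_max_left _ _) (hcC₀ x hx)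
      have hgx : -(max (-g x) 0) ≤ g x := by
        have := le_max_left (-g x) 0; linarith
      have h1 : 0 ≤ (C₀ - c x) * w x ^ 2 := mul_nonneg (by linarith) (sq_nonneg _)
      have h2 : 0 ≤ (g x + max (-g x) 0) * w x := mul_nonneg (by linarith) (hw_nonneg x)
      nlinarith [h1, h2, huw]
    · rw [integral_undef hint]
      apply integral_nonpos
      intro x
      have h1 := mul_nonneg (le_max_right (-g x) 0) (hw_nonneg x)
      have h2 := mul_nonneg hC₀ (sq_nonneg (w x))
      show -(C₀ * w x ^ 2) - max (-g x) 0 * w x ≤ 0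
      linarith
  have hsup : ∫ x in Ω, (c x * u x + g x) * w x ≤ bilinForm J u w :=
    hsuper w hwDJ hw_nonneg (hΩb.subset (Function.support_subset_iff'.mpr hw_out))
  have hΛw : Λ * A ≤ bilinForm J w w := hΛ w hwDJ
  have e1 : ∫ x in Ω, (-(C₀ * w x ^ 2) - max (-g x) 0 * w x)
      = -(C₀ * A) - ∫ x in Ω, max (-g x) 0 * w x := by
    have h1 : ∀ x : EuclideanSpace ℝ (Fin N), -(C₀ * w x ^ 2) - max (-g x) 0 * w x
        = (-C₀) * (w x ^ 2) + (-1) * (max (-g x) 0 * w x) := fun x => by ring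
    simp only [h1]
    rw [integral_add (hw2.const_mul (-C₀)) (hgw.const_mul (-1)),
      integral_const_mul, integral_const_mul]
    ring
  have key : (Λ - C₀) * A ≤ ∫ x in Ω, max (-g x) 0 * w x := by
    have := hA1; rw [e1] at this
    nlinarith [hsup, hC, hΛw, this]
  -- Cauchy-Schwarz via AM-GM
  have hI : 2 * (Λ - C₀) * ∫ x in Ω, max (-g x) 0 * w x
      ≤ (Λ - C₀) ^ 2 * A + Bq := by
    have hrhs : IntegrableOn (fun x => (Λ - C₀) ^ 2 * w x ^ 2 + (max (-g x) 0) ^ 2) Ω :=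
      (hw2.const_mul _).add hg2m
    have hlhs : IntegrableOn (fun x => 2 * (Λ - C₀) * (max (-g x) 0 * w x)) Ω :=
      hgw.const_mul _
    have hmono : ∫ x in Ω, 2 * (Λ - C₀) * (max (-g x) 0 * w x)
        ≤ ∫ x in Ω, ((Λ - C₀) ^ 2 * w x ^ 2 + (max (-g x) 0) ^ 2) := by
      apply setIntegral_mono_on hlhs hrhs hΩm
      intro x _
      nlinarith [sq_nonneg ((Λ - C₀) * w x - max (-g x) 0)]
    rw [integral_const_mul] at hmono
    rw [integral_add (hw2.const_mul _) hg2m, integral_const_mul] at hmono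
    exact hmono
  have hlam : 0 < Λ - C₀ := by linarith
  have hmain : (Λ - C₀) ^ 2 * A ≤ Bq := by
    have h2 : 2 * (Λ - C₀) * ((Λ - C₀) * A) ≤ 2 * (Λ - C₀) * ∫ x in Ω, max (-g x) 0 * w x :=
      mul_le_mul_of_nonneg_left key (by positivity)
    nlinarith [h2, hI]
  -- rewrite the goal integrals
  have hgoalA : ∫ x in Ω, (-min (u x) 0) ^ 2 = A := by
    apply setIntegral_congr_fun hΩm
    intro x hx
    show (-min (u x) 0) ^ 2 = w x ^ 2
    rw [aux_neg_min, hw_in x hx]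
  have hgoalB : ∫ x in Ω, (-min (g x) 0) ^ 2 = Bq := by
    apply setIntegral_congr_fun hΩm
    intro x _
    show (-min (g x) 0) ^ 2 = (max (-g x) 0) ^ 2
    rw [aux_neg_min]
  constructor
  · rw [hgoalA, hgoalB]
    have hA_le : A ≤ Bq / (Λ - C₀) ^ 2 := by
      rw [le_div_iff₀ (by positivity)]
      nlinarith [hmain]
    calc A ^ (1 / 2 : ℝ) ≤ (Bq / (Λ - C₀) ^ 2) ^ (1 / 2 : ℝ) :=
          Real.rpow_le_rpow hA0 hA_le (by norm_num)
      _ = Bq ^ (1 / 2 : ℝ) / (Λ - C₀) := by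
          rw [Real.div_rpow hB0 (by positivity)]
          congr 1
          rw [← Real.rpow_natCast (Λ - C₀) 2, ← Real.rpow_mul hlam.le]
          norm_num
  · intro hg0
    have hBzero : Bq = 0 := by
      have heq : EqOn (fun x => (max (-g x) 0) ^ 2) (fun _ => (0 : ℝ)) Ω := by
        intro x hx
        have h0 : 0 ≤ g x := hg0 x hx
        show (max (-g x) 0) ^ 2 = 0
        rw [max_eq_right (by linarith)]
        norm_num
      rw [hB_def, setIntegral_congr_fun hΩm heq, integral_zero]
    have hAzero : A = 0 := le_antisymm (by nlinarith [hmain, hBzero, pow_pos hlam 2]) hA0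
    have hwz : (fun x => w x ^ 2) =ᵐ[volume.restrict Ω] 0 := by
      rw [← integral_eq_zero_iff_of_nonneg (fun x => sq_nonneg (w x)) hw2]
      exact hAzero
    have hwz2 : ∀ᵐ x, x ∈ Ω → w x ^ 2 = 0 := by
      rw [← ae_restrict_iff' hΩm]
      filter_upwards [hwz] with x hx using hx
    filter_upwards [hwz2, hu0] with x h1 h0
    by_cases hxΩ : x ∈ Ω
    · have hw0 : w x = 0 := by
        have := h1 hxΩ
        exact pow_eq_zero_iff (n := 2) (by norm_num) |>.mp this
      rw [hw_in x hxΩ] at hw0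
      have : -u x ≤ 0 := by
        by_contra hcon
        push_neg at hcon
        rw [max_eq_left hcon.le] at hw0
        linarith
      linarith
    · exact h0 hxΩ

end
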